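/- Let G be a countable group with a proper right-invariant metric d, and let A ⊆ G be such that for every C < ∞ there exists g ∈ A with d(g, A \ {g}) > C. Then A is not 2-divisible: there do not exist disjoint subsets A₁, A₂ of A with A₁ ≈ A and A₂ ≈ A. -/
import Mathlib


open scoped Pointwise

def Bdd {G : Type*} [Group G] (A B : Set G) : Prop :=
  ∃ F : Finset G, A ⊆ (F : Set G) * B

def EquivBdd {G : Type*} [Group G] (A B : Set G) : Prop :=
  Bdd A B ∧ Bdd B A

theorem stmt12 {G : Type*} [Group G] [Countable G] [MetricSpace G]
    (hri : ∀ g h h' : G, dist (h * g) (h' * g) = dist h h')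
    (hproper : ∀ (h : G) (R : ℝ), {g : G | dist g h ≤ R}.Finite)
    (A : Set G)
    (hA : ∀ C : ℝ, ∃ g ∈ A, ∀ h ∈ A, h ≠ g → C < dist g h) :
    ¬∃ A₁ A₂ : Set G, A₁ ⊆ A ∧ A₂ ⊆ A ∧ Disjoint A₁ A₂ ∧
      EquivBdd A₁ A ∧ EquivBdd A₂ A := by
  classical
  rintro ⟨A₁, A₂, h₁, h₂, hdisj, ⟨-, F₁, hF₁⟩, ⟨-, F₂, hF₂⟩⟩
  set C := ∑ f ∈ F₁ ∪ F₂, dist f (1 : G) with hC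
  obtain ⟨g, hg, hiso⟩ := hA C
  obtain ⟨f₁, hf₁, a₁, ha₁, hga₁⟩ := hF₁ hg
  obtain ⟨f₂, hf₂, a₂, ha₂, hga₂⟩ := hF₂ hg
  have key : ∀ (f a : G), f * a = g → f ∈ F₁ ∪ F₂ → dist g a ≤ C := by
    intro f a hfa hf
    have : dist g a = dist f 1 := by
      rw [← hfa]
      calc dist (f * a) a = dist (f * a) (1 * a) := by rw [one_mul]
        _ = dist f 1 := hri a f 1
    rw [this]
    exact Finset.single_le_sum (f := fun x => dist x (1 : G)) (fun i _ => dist_nonneg) hf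
  have hne : a₁ ≠ a₂ := fun h => hdisj.ne_of_mem ha₁ ha₂ h
  rcases ne_or_eq a₁ g with h | h
  · exact absurd (key f₁ a₁ hga₁ (Finset.mem_union_left _ hf₁))
      (not_le.mpr (hiso a₁ (h₁ ha₁) h))
  · have h2 : a₂ ≠ g := fun h' => hne (h.trans h'.symm)
    exact absurd (key f₂ a₂ hga₂ (Finset.mem_union_right _ hf₂))
      (not_le.mpr (hiso a₂ (h₂ ha₂) h2))
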